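/- arXiv:2307.13509 — 2 statements merged into one kernel-verified Lean document; each statement's English description precedes it below -/
import Mathlib

section
/- In the basis representation of Proposition on sparse data, the squared α-Mahalanobis distance of observation X_i with respect to the subset H_0 equals the quadratic form (e_i − (1/h)1_{H_0})' C C̃_{H_0}(C̃_{H_0} + α I_M)^{-2} C' (e_i − (1/h)1_{H_0}); i.e., ‖Ĉ_{H_0}^{1/2}(Ĉ_{H_0} + αI)^{-1}(X_i − X̄_{H_0})‖² = ∑_{j=1}^M (λ̂_j/(λ̂_j + α)²) (⟨ψ̂_j, X_i − X̄_{H_0}⟩)², which equals this matrix expression. -/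
open MeasureTheory Matrix
open scoped RealInnerProductSpace


lemma aux_dot {n : ℕ} (H0 : Finset (Fin n)) (h : ℕ) (ind : Fin n → ℝ)
    (hind : ind = fun i => if i ∈ H0 then (1:ℝ) else 0) (k : Fin n) (x : Fin n → ℝ) :
    (fun l => (if l = k then (1:ℝ) else 0) - (h:ℝ)⁻¹ * ind l) ⬝ᵥ x
      = x k - (h:ℝ)⁻¹ * ∑ l ∈ H0, x l := by
  subst hind
  simp [dotProduct, sub_mul, Finset.sum_sub_distrib, ite_mul, mul_assoc,
    ← Finset.mul_sum, Finset.sum_ite_mem]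

lemma aux_key {n : ℕ} (H0 : Finset (Fin n)) (h : ℕ) (hpos : 0 < h) (hcard : H0.card = h)
    (ind : Fin n → ℝ) (hind : ind = fun i => if i ∈ H0 then (1:ℝ) else 0)
    (x y : Fin n → ℝ) :
    ∑ k ∈ H0, ((fun l => (if l = k then (1:ℝ) else 0) - (h:ℝ)⁻¹ * ind l) ⬝ᵥ x)
        * ((fun l => (if l = k then (1:ℝ) else 0) - (h:ℝ)⁻¹ * ind l) ⬝ᵥ y)
      = y ⬝ᵥ (Matrix.diagonal ind - (h:ℝ)⁻¹ • vecMulVec ind ind) *ᵥ x := by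
  have hh : (h:ℝ) ≠ 0 := Nat.cast_ne_zero.mpr hpos.ne'
  have hsum : ∀ z : Fin n → ℝ, ∑ l, ind l * z l = ∑ l ∈ H0, z l := by
    intro z; subst hind; simp [ite_mul, Finset.sum_ite_mem]
  have hrhs : y ⬝ᵥ (Matrix.diagonal ind - (h:ℝ)⁻¹ • vecMulVec ind ind) *ᵥ x
      = ∑ l ∈ H0, x l * y l - (h:ℝ)⁻¹ * ((∑ l ∈ H0, x l) * (∑ l ∈ H0, y l)) := by
    have hAx : ∀ l, ((Matrix.diagonal ind - (h:ℝ)⁻¹ • vecMulVec ind ind) *ᵥ x) l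
        = ind l * x l - (h:ℝ)⁻¹ * (ind l * ∑ m ∈ H0, x m) := by
      intro l
      have e0 : ∀ m, ((if l = m then ind l else 0) - (h:ℝ)⁻¹ * (ind l * ind m)) * x m
          = (if l = m then ind l * x m else 0) - (h:ℝ)⁻¹ * ind l * (ind m * x m) := by
        intro m; by_cases hm : l = m <;> simp [hm] <;> ring
      simp only [Matrix.mulVec, dotProduct, Matrix.sub_apply, Matrix.diagonal_apply,
        Matrix.smul_apply, vecMulVec_apply, smul_eq_mul]
      rw [Finset.sum_congr rfl fun m _ => e0 m, Finset.sum_sub_distrib,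
        Finset.sum_ite_eq, ← Finset.mul_sum, hsum]
      simp [mul_assoc]
    have e1 : ∀ l, y l * (ind l * x l - (h:ℝ)⁻¹ * (ind l * ∑ m ∈ H0, x m))
        = ind l * (x l * y l) - (h:ℝ)⁻¹ * (∑ m ∈ H0, x m) * (ind l * y l) := by
      intro l; ring
    simp only [dotProduct, hAx]
    rw [Finset.sum_congr rfl fun l _ => e1 l, Finset.sum_sub_distrib, hsum,
      ← Finset.mul_sum, hsum]
    ring
  rw [hrhs]
  have e2 : ∀ k, ((fun l => (if l = k then (1:ℝ) else 0) - (h:ℝ)⁻¹ * ind l) ⬝ᵥ x)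
        * ((fun l => (if l = k then (1:ℝ) else 0) - (h:ℝ)⁻¹ * ind l) ⬝ᵥ y)
      = x k * y k - ((h:ℝ)⁻¹ * ∑ l ∈ H0, y l) * x k
          - ((h:ℝ)⁻¹ * ∑ l ∈ H0, x l) * y k
          + ((h:ℝ)⁻¹ * ∑ l ∈ H0, x l) * ((h:ℝ)⁻¹ * ∑ l ∈ H0, y l) := by
    intro k
    rw [aux_dot H0 h ind hind k x, aux_dot H0 h ind hind k y]; ring
  rw [Finset.sum_congr rfl fun k _ => e2 k, Finset.sum_add_distrib,
    Finset.sum_sub_distrib, Finset.sum_sub_distrib, Finset.sum_const,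
    ← Finset.mul_sum, ← Finset.mul_sum, hcard]
  field_simp
  have hhh : (h:ℝ)^2 * (h:ℝ)⁻¹^2 = 1 := by rw [← mul_pow, mul_inv_cancel₀ hh, one_pow]
  linear_combination ((∑ l ∈ H0, y l) * ∑ i ∈ H0, x i) * hhh

lemma aux_quad {p q : ℕ} (E : Matrix (Fin p) (Fin q) ℝ) (g : Fin p → ℝ) (x : Fin q → ℝ) :
    x ⬝ᵥ (Eᵀ * Matrix.diagonal g * E) *ᵥ x = ∑ j, g j * (E *ᵥ x) j ^ 2 := by
  rw [← Matrix.mulVec_mulVec, ← Matrix.mulVec_mulVec]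
  rw [Matrix.dotProduct_mulVec, Matrix.vecMul_transpose]
  simp only [dotProduct, Matrix.mulVec_diagonal]
  exact Finset.sum_congr rfl fun j _ => by ring

set_option maxHeartbeats 1000000

/-- Squared α-Mahalanobis distance in basis representation:
`‖Ĉ_{H₀}^{1/2}(Ĉ_{H₀}+αI)⁻¹(Xᵢ − X̄_{H₀})‖² = ∑ⱼ (λ̂ⱼ/(λ̂ⱼ+α)²) ⟪ψ̂ⱼ, Xᵢ − X̄_{H₀}⟫²`
which equals the quadratic form
`(eᵢ − (1/h)1_{H₀})' C C̃_{H₀}(C̃_{H₀} + αI)⁻² C' (eᵢ − (1/h)1_{H₀})`. -/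
theorem alpha_mahalanobis_basis_formula
    (I : Set ℝ) (n M h : ℕ) (hpos : 0 < h) (α : ℝ) (hα : 0 < α)
    (φ : Fin M → Lp ℝ 2 (volume.restrict I)) (hΦ : Orthonormal ℝ φ)
    (Cmat : Matrix (Fin n) (Fin M) ℝ)
    (X : Fin n → Lp ℝ 2 (volume.restrict I))
    (hX : ∀ i, X i = ∑ j, Cmat i j • φ j)
    (H0 : Finset (Fin n)) (hcard : H0.card = h)
    (Xbar : Lp ℝ 2 (volume.restrict I))
    (hXbar : Xbar = (h : ℝ)⁻¹ • ∑ i ∈ H0, X i)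
    (ind : Fin n → ℝ) (hind : ind = fun i => if i ∈ H0 then (1 : ℝ) else 0)
    (Ctil : Matrix (Fin M) (Fin M) ℝ)
    (hCtil : Ctil = (h : ℝ)⁻¹ •
      (Cmatᵀ * (Matrix.diagonal ind - (h : ℝ)⁻¹ • vecMulVec ind ind) * Cmat))
    (lhat : Fin M → ℝ) (u : Fin M → Fin M → ℝ)
    (heig : ∀ j, Ctil.mulVec (u j) = lhat j • u j)
    (huortho : ∀ j k, u j ⬝ᵥ u k = if j = k then (1 : ℝ) else 0)
    (ψhat : Fin M → Lp ℝ 2 (volume.restrict I))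
    (hψhat : ∀ j, ψhat j = ∑ k, u j k • φ k)
    (Chat S R : Lp ℝ 2 (volume.restrict I) →L[ℝ] Lp ℝ 2 (volume.restrict I))
    (hChat : ∀ f, Chat f = (h : ℝ)⁻¹ • ∑ i ∈ H0, ⟪X i - Xbar, f⟫ • (X i - Xbar))
    (hS_sa : IsSelfAdjoint S) (hS_pos : ∀ f, 0 ≤ ⟪S f, f⟫)
    (hS : S ∘L S = Chat)
    (hR₁ : (Chat + α • 1) ∘L R = 1) (hR₂ : R ∘L (Chat + α • 1) = 1)
    (i : Fin n) (w : Fin n → ℝ)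
    (hw : w = fun j => (if j = i then (1 : ℝ) else 0) - (h : ℝ)⁻¹ * ind j) :
    ‖S (R (X i - Xbar))‖ ^ 2
      = ∑ j, lhat j / (lhat j + α) ^ 2 * ⟪ψhat j, X i - Xbar⟫ ^ 2 ∧
    ‖S (R (X i - Xbar))‖ ^ 2
      = w ⬝ᵥ (Cmat * (Ctil * (Ctil + α • 1)⁻¹ * (Ctil + α • 1)⁻¹) * Cmatᵀ).mulVec w := by
  have hh : (h:ℝ) ≠ 0 := Nat.cast_ne_zero.mpr hpos.ne'
  set wk : Fin n → Fin n → ℝ :=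
    fun k l => (if l = k then (1:ℝ) else 0) - (h:ℝ)⁻¹ * ind l with hwk
  -- representation of centered observations
  have hXbar' : Xbar = ∑ m, ((h:ℝ)⁻¹ * ∑ l ∈ H0, Cmat l m) • φ m := by
    rw [hXbar]
    have e : ∑ l ∈ H0, X l = ∑ m, (∑ l ∈ H0, Cmat l m) • φ m := by
      simp_rw [hX, Finset.sum_smul]
      exact Finset.sum_comm
    rw [e, Finset.smul_sum]
    simp [smul_smul]
  have hcoord : ∀ (k : Fin n) (m : Fin M),
      (Cmatᵀ *ᵥ wk k) m = Cmat k m - (h:ℝ)⁻¹ * ∑ l ∈ H0, Cmat l m := by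
    intro k m
    have e : (Cmatᵀ *ᵥ wk k) m = wk k ⬝ᵥ (fun l => Cmat l m) := by
      simp [Matrix.mulVec, dotProduct, Matrix.transpose_apply, mul_comm]
    rw [e, hwk]
    exact aux_dot H0 h ind hind k _
  have rep : ∀ k : Fin n, X k - Xbar = ∑ m, (Cmatᵀ *ᵥ wk k) m • φ m := by
    intro k
    rw [hX k, hXbar', ← Finset.sum_sub_distrib]
    refine Finset.sum_congr rfl fun m _ => ?_
    rw [← sub_smul, hcoord k m]
  -- orthonormality of ψhat
  have hψon : Orthonormal ℝ ψhat := by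
    rw [orthonormal_iff_ite]
    intro j k
    rw [hψhat j, hψhat k, hΦ.inner_sum]
    simpa [dotProduct] using huortho j k
  have hψite : ∀ j k, ⟪ψhat j, ψhat k⟫ = if j = k then (1:ℝ) else 0 :=
    orthonormal_iff_ite.mp hψon
  -- inner products with ψhat
  have hin : ∀ (k : Fin n) j, ⟪X k - Xbar, ψhat j⟫ = wk k ⬝ᵥ (Cmat *ᵥ u j) := by
    intro k j
    rw [rep k, hψhat j, hΦ.inner_sum]
    simp only [Matrix.mulVec, dotProduct, Matrix.transpose_apply, Finset.sum_mul,
      Finset.mul_sum, starRingEnd_apply, star_trivial]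
    rw [Finset.sum_comm]
    exact Finset.sum_congr rfl fun l _ => Finset.sum_congr rfl fun m _ => by ring
  -- eigenrelation for Chat
  have eig : ∀ j, Chat (ψhat j) = lhat j • ψhat j := by
    intro j
    rw [hChat]
    have e1 : ∀ k ∈ H0, ⟪X k - Xbar, ψhat j⟫ • (X k - Xbar)
        = ∑ m, ((wk k ⬝ᵥ (Cmat *ᵥ u j)) * (Cmatᵀ *ᵥ wk k) m) • φ m := by
      intro k _
      rw [hin k j, rep k, Finset.smul_sum]
      simp [smul_smul]
    rw [Finset.sum_congr rfl e1, Finset.sum_comm, Finset.smul_sum]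
    rw [hψhat j, Finset.smul_sum]
    refine Finset.sum_congr rfl fun m _ => ?_
    rw [← Finset.sum_smul, smul_smul, smul_smul]
    congr 1
    -- coordinate identity
    have e2 : ∀ k, (Cmatᵀ *ᵥ wk k) m = wk k ⬝ᵥ (fun l => Cmat l m) := by
      intro k
      simp [Matrix.mulVec, dotProduct, Matrix.transpose_apply, mul_comm]
    calc (h:ℝ)⁻¹ * ∑ k ∈ H0, (wk k ⬝ᵥ (Cmat *ᵥ u j)) * (Cmatᵀ *ᵥ wk k) m
        = (h:ℝ)⁻¹ * ∑ k ∈ H0, (wk k ⬝ᵥ (Cmat *ᵥ u j)) * (wk k ⬝ᵥ (fun l => Cmat l m)) := by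
          simp_rw [e2]
      _ = (h:ℝ)⁻¹ * ((fun l => Cmat l m) ⬝ᵥ
            ((Matrix.diagonal ind - (h:ℝ)⁻¹ • vecMulVec ind ind) *ᵥ (Cmat *ᵥ u j))) := by
          rw [aux_key H0 h hpos hcard ind hind]
      _ = (Ctil *ᵥ u j) m := by
          rw [hCtil, Matrix.smul_mulVec, Pi.smul_apply, smul_eq_mul]
          congr 1
          rw [Matrix.mul_assoc, ← Matrix.mulVec_mulVec, ← Matrix.mulVec_mulVec]
          simp [Matrix.mulVec, dotProduct, Matrix.transpose_apply, mul_comm]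
      _ = lhat j * u j m := by rw [heig j]; simp
  -- coordinates
  have hwwk : w = wk i := by rw [hw, hwk]
  have hYrep : X i - Xbar = ∑ m, (Cmatᵀ *ᵥ w) m • φ m := by rw [hwwk]; exact rep i
  set c : Fin M → ℝ := fun j => u j ⬝ᵥ (Cmatᵀ *ᵥ w) with hcdef
  have hc : ∀ j, ⟪ψhat j, X i - Xbar⟫ = c j := by
    intro j
    rw [real_inner_comm, hin i j]
    show wk i ⬝ᵥ Cmat *ᵥ u j = u j ⬝ᵥ Cmatᵀ *ᵥ w
    rw [hwwk]
    simp only [Matrix.mulVec, dotProduct, Matrix.transpose_apply, Finset.mul_sum]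
    rw [Finset.sum_comm]
    exact Finset.sum_congr rfl fun a _ => Finset.sum_congr rfl fun b _ => by ring
  -- completeness of u
  set U : Matrix (Fin M) (Fin M) ℝ := Matrix.of u with hU
  have hUUt : U * Uᵀ = 1 := by
    ext j k
    simpa [Matrix.mul_apply, Matrix.one_apply, dotProduct, hU] using huortho j k
  have hUtU : Uᵀ * U = 1 := mul_eq_one_comm.mp hUUt
  have hcomp : ∀ a b : Fin M, ∑ j, u j a * u j b = if a = b then (1:ℝ) else 0 := by
    intro a b
    have e := congrFun (congrFun hUtU a) b
    simpa [Matrix.mul_apply, Matrix.one_apply, hU] using e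
  -- expansion of Y in the ψhat basis
  have hYψ : X i - Xbar = ∑ j, c j • ψhat j := by
    rw [hYrep]
    have e : ∀ j : Fin M, c j • ψhat j = ∑ m, (c j * u j m) • φ m := by
      intro j; rw [hψhat j, Finset.smul_sum]; simp [smul_smul]
    rw [Finset.sum_congr rfl fun j _ => e j, Finset.sum_comm]
    refine Finset.sum_congr rfl fun m _ => ?_
    rw [← Finset.sum_smul]
    congr 1
    symm
    simp only [hcdef, dotProduct]
    calc ∑ j, (∑ a, u j a * (Cmatᵀ *ᵥ w) a) * u j m
        = ∑ a, ((Cmatᵀ *ᵥ w) a * ∑ j, u j a * u j m) := by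
          simp_rw [Finset.sum_mul, Finset.mul_sum]
          rw [Finset.sum_comm]
          exact Finset.sum_congr rfl fun a _ => Finset.sum_congr rfl fun j _ => by ring
      _ = (Cmatᵀ *ᵥ w) m := by
          simp_rw [hcomp]
          simp
  -- self-adjointness and positivity
  have hsymm : ∀ x y, ⟪S x, y⟫ = ⟪x, S y⟫ := fun x y =>
    (ContinuousLinearMap.isSelfAdjoint_iff_isSymmetric.mp hS_sa) x y
  have hlpos : ∀ j, 0 < lhat j + α := by
    intro j
    have h1 : ⟪Chat (ψhat j), ψhat j⟫ = lhat j := by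
      rw [eig j, real_inner_smul_left, hψite j j]
      simp
    have h2 : 0 ≤ lhat j := by
      rw [← h1, ← hS]
      have e : (S ∘L S) (ψhat j) = S (S (ψhat j)) := rfl
      rw [e, hsymm]
      exact real_inner_self_nonneg
    linarith
  -- action of the resolvent
  have hRψ : ∀ j, R (ψhat j) = (lhat j + α)⁻¹ • ψhat j := by
    intro j
    have hne : lhat j + α ≠ 0 := (hlpos j).ne'
    have h1 : (Chat + α • (1 : Lp ℝ 2 (volume.restrict I) →L[ℝ] Lp ℝ 2 (volume.restrict I)))
        ((lhat j + α)⁻¹ • ψhat j) = ψhat j := by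
      rw [ContinuousLinearMap.add_apply, _root_.map_smul, eig j, ContinuousLinearMap.smul_apply,
        ContinuousLinearMap.one_apply, smul_smul, smul_smul, ← add_smul]
      rw [show (lhat j + α)⁻¹ * lhat j + α * (lhat j + α)⁻¹ = 1 from by field_simp, one_smul]
    calc R (ψhat j) = R ((Chat + α • 1) ((lhat j + α)⁻¹ • ψhat j)) := by rw [h1]
      _ = (lhat j + α)⁻¹ • ψhat j := by
          have e := ContinuousLinearMap.ext_iff.mp hR₂ ((lhat j + α)⁻¹ • ψhat j)
          simpa using e
  -- squared norm
  have hRY : R (X i - Xbar) = ∑ j, (c j * (lhat j + α)⁻¹) • ψhat j := by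
    rw [hYψ, map_sum]
    refine Finset.sum_congr rfl fun j _ => ?_
    rw [_root_.map_smul, hRψ j, smul_smul]
  have hChatRY : Chat (R (X i - Xbar)) = ∑ j, (c j * (lhat j + α)⁻¹ * lhat j) • ψhat j := by
    rw [hRY, map_sum]
    refine Finset.sum_congr rfl fun j _ => ?_
    rw [_root_.map_smul, eig j, smul_smul]
  have hnorm1 : ‖S (R (X i - Xbar))‖ ^ 2
      = ∑ j, lhat j / (lhat j + α) ^ 2 * (c j) ^ 2 := by
    rw [← real_inner_self_eq_norm_sq, hsymm]
    have e : S (S (R (X i - Xbar))) = Chat (R (X i - Xbar)) := by rw [← hS]; rfl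
    rw [e, hChatRY, hRY, hψon.inner_sum]
    refine Finset.sum_congr rfl fun j _ => ?_
    have hne : lhat j + α ≠ 0 := (hlpos j).ne'
    simp only [starRingEnd_apply, star_trivial]
    rw [show lhat j / (lhat j + α)^2 = lhat j * ((lhat j + α)⁻¹ * (lhat j + α)⁻¹) from by
      rw [div_eq_mul_inv, sq, mul_inv]]
    ring
  -- matrix diagonalization
  have hCU : Ctil * Uᵀ = Uᵀ * Matrix.diagonal lhat := by
    ext m j
    have e : (Ctil *ᵥ u j) m = lhat j * u j m := by rw [heig j]; simp
    simp only [Matrix.mul_apply, Matrix.transpose_apply, Matrix.of_apply, hU,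
      Matrix.diagonal_apply, mul_ite, mul_zero, Finset.sum_ite_eq', Finset.mem_univ, if_true]
    rw [show ∑ k, Ctil m k * u j k = (Ctil *ᵥ u j) m from rfl, e]
    ring
  have hCtilU : Ctil = Uᵀ * Matrix.diagonal lhat * U := by
    calc Ctil = Ctil * (Uᵀ * U) := by rw [hUtU, Matrix.mul_one]
      _ = (Ctil * Uᵀ) * U := by rw [Matrix.mul_assoc]
      _ = Uᵀ * Matrix.diagonal lhat * U := by rw [hCU]
  have conj_mul : ∀ A B : Matrix (Fin M) (Fin M) ℝ,
      (Uᵀ * A * U) * (Uᵀ * B * U) = Uᵀ * (A * B) * U := by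
    intro A B
    simp only [Matrix.mul_assoc]
    rw [← Matrix.mul_assoc U Uᵀ (B * U), hUUt, Matrix.one_mul]
  have hD : Matrix.diagonal lhat + α • (1 : Matrix (Fin M) (Fin M) ℝ)
      = Matrix.diagonal (fun j => lhat j + α) := by
    ext a b
    by_cases hab : a = b <;>
      simp [Matrix.diagonal_apply, Matrix.one_apply, hab]
  have halpha : Ctil + α • 1 = Uᵀ * Matrix.diagonal (fun j => lhat j + α) * U := by
    have hone : α • (1 : Matrix (Fin M) (Fin M) ℝ) = Uᵀ * (α • 1) * U := by
      rw [Matrix.mul_smul, Matrix.mul_one, Matrix.smul_mul, hUtU]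
    rw [hCtilU, hone, ← Matrix.add_mul, ← Matrix.mul_add, hD]
  have hInv : (Ctil + α • 1)⁻¹ = Uᵀ * Matrix.diagonal (fun j => (lhat j + α)⁻¹) * U := by
    apply Matrix.inv_eq_right_inv
    rw [halpha, conj_mul, Matrix.diagonal_mul_diagonal]
    rw [show (fun j => (lhat j + α) * (lhat j + α)⁻¹) = fun _ : Fin M => (1:ℝ) from
      funext fun j => mul_inv_cancel₀ (hlpos j).ne']
    rw [Matrix.diagonal_one, Matrix.mul_one, hUtU]
  have hprod : Ctil * (Ctil + α • 1)⁻¹ * (Ctil + α • 1)⁻¹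
      = Uᵀ * Matrix.diagonal (fun i => lhat i * (lhat i + α)⁻¹ * (lhat i + α)⁻¹) * U := by
    rw [hInv, hCtilU, conj_mul, conj_mul, Matrix.diagonal_mul_diagonal,
      Matrix.diagonal_mul_diagonal]
  have hEw : ∀ j, ((U * Cmatᵀ) *ᵥ w) j = c j := by
    intro j
    rw [← Matrix.mulVec_mulVec]
    simp [Matrix.mulVec, dotProduct, hU, hcdef]
  have hgoal2 : w ⬝ᵥ (Cmat * (Ctil * (Ctil + α • 1)⁻¹ * (Ctil + α • 1)⁻¹) * Cmatᵀ) *ᵥ w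
      = ∑ j, lhat j / (lhat j + α) ^ 2 * (c j) ^ 2 := by
    rw [hprod]
    rw [show Cmat * (Uᵀ * Matrix.diagonal (fun i => lhat i * (lhat i + α)⁻¹ * (lhat i + α)⁻¹) * U) * Cmatᵀ
        = (U * Cmatᵀ)ᵀ * Matrix.diagonal (fun i => lhat i * (lhat i + α)⁻¹ * (lhat i + α)⁻¹) * (U * Cmatᵀ) from by
      rw [Matrix.transpose_mul, Matrix.transpose_transpose]
      simp only [Matrix.mul_assoc]]
    rw [aux_quad]
    refine Finset.sum_congr rfl fun j _ => ?_
    rw [hEw j]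
    rw [show lhat j / (lhat j + α)^2 = lhat j * ((lhat j + α)⁻¹ * (lhat j + α)⁻¹) from by
      rw [div_eq_mul_inv, sq, mul_inv]]
    ring
  refine ⟨?_, ?_⟩
  · rw [hnorm1]
    exact Finset.sum_congr rfl fun j _ => by rw [hc j]
  · rw [hnorm1, hgoal2]
end

section
/- Under the assumptions that ‖Ĉ_n − C‖_op → 0 for bounded self-adjoint positive semidefinite operators and ‖μ̂_n‖ → 0, one has for every fixed X ∈ H and α > 0: ‖Ĉ_n^{1/2}(Ĉ_n + αI)^{-1}(X − μ̂_n)‖ → ‖C^{1/2}(C + αI)^{-1} X‖. -/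
open Filter
open scoped RealInnerProductSpace

/-- Resolvent bound: if `A` is positive and `(A + αI) ∘ B = 1`, then `‖B‖ ≤ α⁻¹`. -/
lemma aux_resolvent_bound {H : Type*} [NormedAddCommGroup H] [InnerProductSpace ℝ H]
    (A B : H →L[ℝ] H) (hpos : ∀ x, 0 ≤ ⟪A x, x⟫) (α : ℝ) (hα : 0 < α)
    (h : (A + α • (1 : H →L[ℝ] H)) ∘L B = 1) : ‖B‖ ≤ α⁻¹ := by
  apply ContinuousLinearMap.opNorm_le_bound _ (by positivity)
  intro y
  set x := B y with hx
  have hxy : A x + α • x = y := by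
    have := congrArg (fun T : H →L[ℝ] H => T y) h
    simpa [ContinuousLinearMap.comp_apply, ContinuousLinearMap.add_apply,
      ContinuousLinearMap.smul_apply] using this
  have h1 : α * ‖x‖ ^ 2 ≤ ⟪y, x⟫ := by
    have : ⟪y, x⟫ = ⟪A x, x⟫ + α * ⟪x, x⟫ := by
      rw [← hxy, inner_add_left, real_inner_smul_left]
    rw [this, real_inner_self_eq_norm_sq]
    nlinarith [hpos x]
  have h2 : ⟪y, x⟫ ≤ ‖y‖ * ‖x‖ := real_inner_le_norm y x
  rcases eq_or_lt_of_le (norm_nonneg x) with h0 | h0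
  · rw [← h0]; positivity
  · have : α * ‖x‖ ≤ ‖y‖ := by nlinarith
    calc ‖x‖ = α⁻¹ * (α * ‖x‖) := (inv_mul_cancel_left₀ hα.ne' ‖x‖).symm
    _ ≤ α⁻¹ * ‖y‖ := mul_le_mul_of_nonneg_left this (by positivity)

/-- Deterministic core of consistency of the empirical α-standardization norm:
if `‖Ĉₙ − C‖ → 0` (bounded self-adjoint positive semidefinite operators) and
`‖μ̂ₙ‖ → 0`, then for fixed `X` and `α > 0`,
`‖Ĉₙ^{1/2}(Ĉₙ + αI)⁻¹(X − μ̂ₙ)‖ → ‖C^{1/2}(C + αI)⁻¹ X‖`. -/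
theorem empirical_standardization_norm_convergence
    {H : Type*} [NormedAddCommGroup H] [InnerProductSpace ℝ H] [CompleteSpace H]
    (C : H →L[ℝ] H) (Cn : ℕ → H →L[ℝ] H)
    (hC_sa : IsSelfAdjoint C) (hC_pos : ∀ x, 0 ≤ ⟪C x, x⟫)
    (hCn_sa : ∀ n, IsSelfAdjoint (Cn n)) (hCn_pos : ∀ n x, 0 ≤ ⟪Cn n x, x⟫)
    (hconv : Tendsto (fun n => ‖Cn n - C‖) atTop (nhds 0))
    (μn : ℕ → H) (hμ : Tendsto (fun n => ‖μn n‖) atTop (nhds 0))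
    (α : ℝ) (hα : 0 < α)
    (S : H →L[ℝ] H) (Sn : ℕ → H →L[ℝ] H)
    (hS_sa : IsSelfAdjoint S) (hS_pos : ∀ x, 0 ≤ ⟪S x, x⟫) (hS : S ∘L S = C)
    (hSn_sa : ∀ n, IsSelfAdjoint (Sn n)) (hSn_pos : ∀ n x, 0 ≤ ⟪Sn n x, x⟫)
    (hSn : ∀ n, Sn n ∘L Sn n = Cn n)
    (R : H →L[ℝ] H) (Rn : ℕ → H →L[ℝ] H)
    (hR₁ : (C + α • (1 : H →L[ℝ] H)) ∘L R = 1)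
    (hR₂ : R ∘L (C + α • (1 : H →L[ℝ] H)) = 1)
    (hRn₁ : ∀ n, (Cn n + α • (1 : H →L[ℝ] H)) ∘L Rn n = 1)
    (hRn₂ : ∀ n, Rn n ∘L (Cn n + α • (1 : H →L[ℝ] H)) = 1)
    (X : H) :
    Tendsto (fun n => ‖Sn n (Rn n (X - μn n))‖) atTop (nhds ‖S (R X)‖) := by
  have hRnb : ∀ n, ‖Rn n‖ ≤ α⁻¹ := fun n =>
    aux_resolvent_bound (Cn n) (Rn n) (hCn_pos n) α hα (hRn₁ n)
  -- Rn − R = Rn ∘ (C − Cn) ∘ R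
  have hdiff : ∀ n, Rn n - R = Rn n ∘L ((C - Cn n) ∘L R) := by
    intro n
    have e1 : Rn n ∘L ((C + α • (1 : H →L[ℝ] H)) ∘L R) = Rn n := by
      rw [hR₁]; ext y; simp
    have e2 : Rn n ∘L ((Cn n + α • (1 : H →L[ℝ] H)) ∘L R) = R := by
      rw [← ContinuousLinearMap.comp_assoc, hRn₂ n]; ext y; simp
    calc Rn n - R
        = Rn n ∘L ((C + α • (1 : H →L[ℝ] H)) ∘L R)
          - Rn n ∘L ((Cn n + α • (1 : H →L[ℝ] H)) ∘L R) := by rw [e1, e2]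
      _ = Rn n ∘L ((C - Cn n) ∘L R) := by
          rw [← ContinuousLinearMap.comp_sub, ← ContinuousLinearMap.sub_comp]
          congr 1
          abel
  have hRconv : ∀ n, ‖Rn n - R‖ ≤ α⁻¹ * ‖Cn n - C‖ * ‖R‖ := by
    intro n
    rw [hdiff n]
    calc ‖Rn n ∘L ((C - Cn n) ∘L R)‖ ≤ ‖Rn n‖ * ‖(C - Cn n) ∘L R‖ :=
          ContinuousLinearMap.opNorm_comp_le _ _
      _ ≤ ‖Rn n‖ * (‖C - Cn n‖ * ‖R‖) := by
          apply mul_le_mul_of_nonneg_left (ContinuousLinearMap.opNorm_comp_le _ _)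
            (norm_nonneg _)
      _ = ‖Rn n‖ * (‖Cn n - C‖ * ‖R‖) := by rw [norm_sub_rev]
      _ ≤ α⁻¹ * (‖Cn n - C‖ * ‖R‖) := by
          apply mul_le_mul_of_nonneg_right (hRnb n) (by positivity)
      _ = α⁻¹ * ‖Cn n - C‖ * ‖R‖ := by ring
  set z : H := R X with hz
  set zn : ℕ → H := fun n => Rn n (X - μn n) with hzn
  -- zn → z
  have hznz : Tendsto zn atTop (nhds z) := by
    rw [tendsto_iff_norm_sub_tendsto_zero]
    apply squeeze_zero (fun n => norm_nonneg _)
      (g := fun n => α⁻¹ * ‖Cn n - C‖ * ‖R‖ * ‖X‖ + α⁻¹ * ‖μn n‖)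
    · intro n
      have : zn n - z = (Rn n - R) X - Rn n (μn n) := by
        simp [hzn, hz, map_sub, ContinuousLinearMap.sub_apply]
        abel
      rw [this]
      calc ‖(Rn n - R) X - Rn n (μn n)‖ ≤ ‖(Rn n - R) X‖ + ‖Rn n (μn n)‖ :=
            norm_sub_le _ _
        _ ≤ ‖Rn n - R‖ * ‖X‖ + ‖Rn n‖ * ‖μn n‖ := by
            gcongr <;> exact ContinuousLinearMap.le_opNorm _ _
        _ ≤ α⁻¹ * ‖Cn n - C‖ * ‖R‖ * ‖X‖ + α⁻¹ * ‖μn n‖ := by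
            gcongr
            · exact hRconv n
            · exact hRnb n
    · have h1 : Tendsto (fun n => α⁻¹ * ‖Cn n - C‖ * ‖R‖ * ‖X‖) atTop (nhds 0) := by
        have := ((hconv.const_mul α⁻¹).mul_const ‖R‖).mul_const ‖X‖
        simpa using this
      have h2 : Tendsto (fun n => α⁻¹ * ‖μn n‖) atTop (nhds 0) := by
        have := hμ.const_mul α⁻¹
        simpa using this
      simpa using h1.add h2
  -- Cn n (zn n) → C z
  have hCz : Tendsto (fun n => Cn n (zn n)) atTop (nhds (C z)) := by
    rw [tendsto_iff_norm_sub_tendsto_zero]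
    apply squeeze_zero (fun n => norm_nonneg _)
      (g := fun n => ‖Cn n - C‖ * ‖zn n‖ + ‖C‖ * ‖zn n - z‖)
    · intro n
      calc ‖Cn n (zn n) - C z‖
          ≤ ‖Cn n (zn n) - C (zn n)‖ + ‖C (zn n) - C z‖ := norm_sub_le_norm_sub_add_norm_sub _ _ _
        _ ≤ ‖Cn n - C‖ * ‖zn n‖ + ‖C‖ * ‖zn n - z‖ := by
            gcongr
            · exact ContinuousLinearMap.le_opNorm (Cn n - C) (zn n)
            · rw [← map_sub]; exact ContinuousLinearMap.le_opNorm _ _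
    · have h1 : Tendsto (fun n => ‖Cn n - C‖ * ‖zn n‖) atTop (nhds 0) := by
        have := hconv.mul (hznz.norm)
        simpa using this
      have h2 : Tendsto (fun n => ‖C‖ * ‖zn n - z‖) atTop (nhds 0) := by
        have := ((tendsto_iff_norm_sub_tendsto_zero.mp hznz).const_mul ‖C‖)
        simpa using this
      simpa using h1.add h2
  -- inner products converge
  have hinner : Tendsto (fun n => ⟪Cn n (zn n), zn n⟫) atTop (nhds ⟪C z, z⟫) :=
    hCz.inner hznz
  -- ‖Sn n w‖² = ⟪Cn n w, w⟫
  have hsq : ∀ n (w : H), ‖Sn n w‖ = Real.sqrt ⟪Cn n w, w⟫ := by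
    intro n w
    have : ⟪Cn n w, w⟫ = ‖Sn n w‖ ^ 2 := by
      rw [← hSn n, ContinuousLinearMap.comp_apply, ← real_inner_self_eq_norm_sq]
      exact (ContinuousLinearMap.isSelfAdjoint_iff_isSymmetric.mp (hSn_sa n)) (Sn n w) w
    rw [this, Real.sqrt_sq (norm_nonneg _)]
  have hsq' : ‖S z‖ = Real.sqrt ⟪C z, z⟫ := by
    have : ⟪C z, z⟫ = ‖S z‖ ^ 2 := by
      rw [← hS, ContinuousLinearMap.comp_apply, ← real_inner_self_eq_norm_sq]
      exact (ContinuousLinearMap.isSelfAdjoint_iff_isSymmetric.mp hS_sa) (S z) z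
    rw [this, Real.sqrt_sq (norm_nonneg _)]
  simp only [hsq, hsq']
  exact (Real.continuous_sqrt.continuousAt.tendsto.comp hinner)
end
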